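/- Let a, b, c, d be nonzero reals. Real numbers (x, y) satisfy the system a x² + b y² = y and d x² + c y² = x if and only if x satisfies (bd − ac)² x⁴ − 2b(bd − ac) x³ + (b² + cd) x² − c x = 0 and y is determined accordingly (y = (x − d x²)/c when appropriate). In particular, every solution x of the system satisfies this quartic equation. -/

import Mathlib

/-- The idempotent system `a x² + b y² = y`, `d x² + c y² = x` of the
2-dimensional evolution algebra of permutations (a,b,c,d nonzero) is equivalent
to the quartic `(bd-ac)² x⁴ - 2b(bd-ac) x³ + (b²+cd) x² - c x = 0` together with
`y` determined from `x`; in particular every solution `x` satisfies the quartic. -/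
theorem stmt15 (a b c d : ℝ) (ha : a ≠ 0) (hb : b ≠ 0) (hc : c ≠ 0) (hd : d ≠ 0)
    (x y : ℝ) :
    (a * x ^ 2 + b * y ^ 2 = y ∧ d * x ^ 2 + c * y ^ 2 = x) ↔
      ((b * d - a * c) ^ 2 * x ^ 4 - 2 * b * (b * d - a * c) * x ^ 3 +
          (b ^ 2 + c * d) * x ^ 2 - c * x = 0 ∧
        y = (b * x - (b * d - a * c) * x ^ 2) / c) := by
  constructor
  · rintro ⟨h1, h2⟩
    constructor
    · linear_combination ((b * x - (b * d - a * c) * x ^ 2) + c * y) * (c * h1 - b * h2) + c * h2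
    · field_simp
      linear_combination b * h2 - c * h1
  · rintro ⟨hq, hy⟩
    subst hy
    have hP2 : (b * x - (b * d - a * c) * x ^ 2) ^ 2 = c * x - c * d * x ^ 2 := by
      linear_combination hq
    constructor
    · field_simp
      linear_combination b * hP2
    · field_simp
      linear_combination hP2
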